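/- Let (Z, 𝒵) be a measurable space, let ν and ν' be probability measures on Z both absolutely continuous with respect to a sigma-finite measure υ, and let f : Z → ℝ be measurable with f ∈ L²(ν) ∩ L²(ν'). Then |∫ f dν − ∫ f dν'| ≤ 2 · (∫ f² dν + ∫ f² dν')^{1/2} · D_H(ν, ν'), where D_H denotes the Hellinger distance D_H(ν,ν')² = (1/2) ∫ (√(dν/dυ) − √(dν'/dυ))² dυ. -/

import Mathlib

open MeasureTheory Real

/-- Hellinger distance of two measures w.r.t. a dominating measure `υ`. -/
noncomputable def hellingerDist {Z : Type*} [MeasurableSpace Z]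
    (ν ν' υ : Measure Z) : ℝ :=
  Real.sqrt ((1 / 2) * ∫ z, (Real.sqrt ((ν.rnDeriv υ z).toReal) -
    Real.sqrt ((ν'.rnDeriv υ z).toReal)) ^ 2 ∂υ)

theorem stmt0 {Z : Type*} [MeasurableSpace Z]
    (ν ν' υ : Measure Z) [IsProbabilityMeasure ν] [IsProbabilityMeasure ν']
    [SigmaFinite υ] (hν : ν ≪ υ) (hν' : ν' ≪ υ)
    (f : Z → ℝ) (hf : Measurable f)
    (hf2 : MemLp f 2 ν) (hf2' : MemLp f 2 ν') :
    |(∫ z, f z ∂ν) - ∫ z, f z ∂ν'| ≤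
      2 * Real.sqrt ((∫ z, (f z) ^ 2 ∂ν) + ∫ z, (f z) ^ 2 ∂ν') *
        hellingerDist ν ν' υ := by
  set g : Z → ℝ := fun z => (ν.rnDeriv υ z).toReal with hg_def
  set g' : Z → ℝ := fun z => (ν'.rnDeriv υ z).toReal with hg'_def
  have hgm : Measurable g := (Measure.measurable_rnDeriv ν υ).ennreal_toReal
  have hg'm : Measurable g' := (Measure.measurable_rnDeriv ν' υ).ennreal_toReal
  have hg0 : ∀ z, 0 ≤ g z := fun z => ENNReal.toReal_nonneg
  have hg'0 : ∀ z, 0 ≤ g' z := fun z => ENNReal.toReal_nonneg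
  set a : Z → ℝ := fun z => f z * (Real.sqrt (g z) + Real.sqrt (g' z)) with ha_def
  set b : Z → ℝ := fun z => Real.sqrt (g z) - Real.sqrt (g' z) with hb_def
  have ham : Measurable a := hf.mul ((hgm.sqrt).add (hg'm.sqrt))
  have hbm : Measurable b := (hgm.sqrt).sub (hg'm.sqrt)
  -- integrability of g, g'
  have hgint : Integrable g υ := Measure.integrable_toReal_rnDeriv
  have hg'int : Integrable g' υ := Measure.integrable_toReal_rnDeriv
  -- integrability of f² against ν, ν'
  have hfsq : Integrable (fun z => f z ^ 2) ν := hf2.integrable_sq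
  have hfsq' : Integrable (fun z => f z ^ 2) ν' := hf2'.integrable_sq
  -- push to υ
  have hgf2 : Integrable (fun z => g z * f z ^ 2) υ := by
    have := (integrable_rnDeriv_smul_iff (f := fun z => f z ^ 2) hν).mpr hfsq
    simpa [smul_eq_mul] using this
  have hg'f2 : Integrable (fun z => g' z * f z ^ 2) υ := by
    have := (integrable_rnDeriv_smul_iff (f := fun z => f z ^ 2) hν').mpr hfsq'
    simpa [smul_eq_mul] using this
  -- integral change of variables
  have hIg : ∫ z, g z * f z ∂υ = ∫ z, f z ∂ν := by
    have := integral_rnDeriv_smul (f := f) hν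
    simpa [smul_eq_mul] using this
  have hIg' : ∫ z, g' z * f z ∂υ = ∫ z, f z ∂ν' := by
    have := integral_rnDeriv_smul (f := f) hν'
    simpa [smul_eq_mul] using this
  have hIgsq : ∫ z, g z * f z ^ 2 ∂υ = ∫ z, f z ^ 2 ∂ν := by
    have := integral_rnDeriv_smul (f := fun z => f z ^ 2) hν
    simpa [smul_eq_mul] using this
  have hIg'sq : ∫ z, g' z * f z ^ 2 ∂υ = ∫ z, f z ^ 2 ∂ν' := by
    have := integral_rnDeriv_smul (f := fun z => f z ^ 2) hν'
    simpa [smul_eq_mul] using this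
  have hfint : Integrable f ν := hf2.integrable one_le_two
  have hfint' : Integrable f ν' := hf2'.integrable one_le_two
  have hgf : Integrable (fun z => g z * f z) υ := by
    have := (integrable_rnDeriv_smul_iff (f := f) hν).mpr hfint
    simpa [smul_eq_mul] using this
  have hg'f : Integrable (fun z => g' z * f z) υ := by
    have := (integrable_rnDeriv_smul_iff (f := f) hν').mpr hfint'
    simpa [smul_eq_mul] using this
  -- pointwise identity : a z * b z = g z * f z - g' z * f z
  have hab : ∀ z, a z * b z = g z * f z - g' z * f z := by
    intro z
    have h1 : Real.sqrt (g z) * Real.sqrt (g z) = g z := Real.mul_self_sqrt (hg0 z)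
    have h2 : Real.sqrt (g' z) * Real.sqrt (g' z) = g' z := Real.mul_self_sqrt (hg'0 z)
    simp only [ha_def, hb_def]
    linear_combination f z * h1 - f z * h2
  -- a and b are Memℒp 2 over υ
  have hbsq_int : Integrable (fun z => b z ^ 2) υ := by
    refine Integrable.mono' ((hgint.add hg'int).const_mul 2) (hbm.pow_const 2).aestronglyMeasurable
      (Filter.Eventually.of_forall fun z => ?_)
    have h1 := Real.sq_sqrt (hg0 z)
    have h2 := Real.sq_sqrt (hg'0 z)
    have := sq_nonneg (Real.sqrt (g z) + Real.sqrt (g' z))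
    rw [Real.norm_eq_abs, abs_of_nonneg (sq_nonneg _)]
    simp only [hb_def, Pi.add_apply]
    nlinarith [h1, h2, this]
  have hasq_int : Integrable (fun z => a z ^ 2) υ := by
    refine Integrable.mono' ((hgf2.add hg'f2).const_mul 2) (ham.pow_const 2).aestronglyMeasurable
      (Filter.Eventually.of_forall fun z => ?_)
    have h1 := Real.sq_sqrt (hg0 z)
    have h2 := Real.sq_sqrt (hg'0 z)
    have h3 := sq_nonneg (Real.sqrt (g z) - Real.sqrt (g' z))
    rw [Real.norm_eq_abs, abs_of_nonneg (sq_nonneg _)]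
    simp only [ha_def, Pi.add_apply]
    rw [mul_pow]
    have hkey : (Real.sqrt (g z) + Real.sqrt (g' z)) ^ 2 ≤ 2 * (g z + g' z) := by
      nlinarith [h1, h2, h3]
    nlinarith [mul_le_mul_of_nonneg_left hkey (sq_nonneg (f z))]
  have haL2 : MemLp a 2 υ := (memLp_two_iff_integrable_sq ham.aestronglyMeasurable).mpr hasq_int
  have hbL2 : MemLp b 2 υ := (memLp_two_iff_integrable_sq hbm.aestronglyMeasurable).mpr hbsq_int
  -- the difference of integrals
  have hdiff : (∫ z, f z ∂ν) - ∫ z, f z ∂ν' = ∫ z, a z * b z ∂υ := by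
    rw [← hIg, ← hIg', ← integral_sub hgf hg'f]
    exact integral_congr_ae (Filter.Eventually.of_forall fun z => (hab z).symm)
  -- Cauchy-Schwarz
  have hconj : Real.HolderConjugate 2 2 := Real.HolderConjugate.two_two
  have hCS : ∫ z, ‖a z‖ * ‖b z‖ ∂υ ≤
      (∫ z, ‖a z‖ ^ (2 : ℝ) ∂υ) ^ (1 / (2 : ℝ)) * (∫ z, ‖b z‖ ^ (2 : ℝ) ∂υ) ^ (1 / (2 : ℝ)) := by
    refine integral_mul_norm_le_Lp_mul_Lq hconj ?_ ?_
    · simpa using haL2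
    · simpa using hbL2
  have h0 : |∫ z, a z * b z ∂υ| ≤ ∫ z, ‖a z‖ * ‖b z‖ ∂υ := by
    calc |∫ z, a z * b z ∂υ| ≤ ∫ z, ‖a z * b z‖ ∂υ := by
          simpa [Real.norm_eq_abs] using norm_integral_le_integral_norm (fun z => a z * b z) (μ := υ)
      _ = ∫ z, ‖a z‖ * ‖b z‖ ∂υ := by simp_rw [norm_mul]
  -- rewrite rpow to pow
  have hA : ∫ z, ‖a z‖ ^ (2 : ℝ) ∂υ = ∫ z, a z ^ 2 ∂υ := by
    refine integral_congr_ae (Filter.Eventually.of_forall fun z => ?_)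
    simp only []
    rw [Real.rpow_two]
    simp [Real.norm_eq_abs, sq_abs]
  have hB : ∫ z, ‖b z‖ ^ (2 : ℝ) ∂υ = ∫ z, b z ^ 2 ∂υ := by
    refine integral_congr_ae (Filter.Eventually.of_forall fun z => ?_)
    simp only []
    rw [Real.rpow_two]
    simp [Real.norm_eq_abs, sq_abs]
  set S : ℝ := (∫ z, (f z) ^ 2 ∂ν) + ∫ z, (f z) ^ 2 ∂ν' with hS_def
  have hS0 : 0 ≤ S := by
    have h1 : 0 ≤ ∫ z, (f z) ^ 2 ∂ν := integral_nonneg fun z => sq_nonneg _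
    have h2 : 0 ≤ ∫ z, (f z) ^ 2 ∂ν' := integral_nonneg fun z => sq_nonneg _
    linarith
  -- bound ∫ a²
  have hAle : ∫ z, a z ^ 2 ∂υ ≤ 2 * S := by
    have : ∫ z, a z ^ 2 ∂υ ≤ ∫ z, 2 * (g z * f z ^ 2 + g' z * f z ^ 2) ∂υ := by
      refine integral_mono hasq_int ((hgf2.add hg'f2).const_mul 2)
        (fun z => ?_)
      have h1 := Real.sq_sqrt (hg0 z)
      have h2 := Real.sq_sqrt (hg'0 z)
      have h3 := sq_nonneg (Real.sqrt (g z) - Real.sqrt (g' z))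
      simp only [ha_def]
      rw [mul_pow]
      have h4 : (Real.sqrt (g z) + Real.sqrt (g' z)) ^ 2 ≤ 2 * (g z + g' z) := by
        nlinarith [h1, h2, h3]
      nlinarith [mul_le_mul_of_nonneg_left h4 (sq_nonneg (f z))]
    calc ∫ z, a z ^ 2 ∂υ ≤ ∫ z, 2 * (g z * f z ^ 2 + g' z * f z ^ 2) ∂υ := this
      _ = 2 * S := by
          rw [integral_const_mul, integral_add hgf2 hg'f2, hIgsq, hIg'sq]
  -- ∫ b² = 2 * D²
  have hBint0 : 0 ≤ ∫ z, b z ^ 2 ∂υ := integral_nonneg fun z => sq_nonneg _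
  have hD : hellingerDist ν ν' υ = Real.sqrt ((1/2) * ∫ z, b z ^ 2 ∂υ) := rfl
  have hD0 : 0 ≤ hellingerDist ν ν' υ := Real.sqrt_nonneg _
  have hBeq : ∫ z, b z ^ 2 ∂υ = 2 * hellingerDist ν ν' υ ^ 2 := by
    rw [hD, Real.sq_sqrt (by linarith)]
    ring
  -- combine
  have hfinal : |∫ z, a z * b z ∂υ| ≤ (2 * S) ^ ((1:ℝ)/2) * (2 * hellingerDist ν ν' υ ^ 2) ^ ((1:ℝ)/2) := by
    refine h0.trans (hCS.trans ?_)
    rw [hA, hB, hBeq]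
    refine mul_le_mul_of_nonneg_right ?_ (Real.rpow_nonneg (by positivity) _)
    exact Real.rpow_le_rpow (integral_nonneg fun z => sq_nonneg _) hAle (by norm_num)
  have hsimp : (2 * S) ^ ((1:ℝ)/2) * (2 * hellingerDist ν ν' υ ^ 2) ^ ((1:ℝ)/2)
      = 2 * Real.sqrt S * hellingerDist ν ν' υ := by
    rw [← Real.sqrt_eq_rpow, ← Real.sqrt_eq_rpow, Real.sqrt_mul (by norm_num : (0:ℝ) ≤ 2),
      Real.sqrt_mul (by norm_num : (0:ℝ) ≤ 2), Real.sqrt_sq hD0]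
    have h22 : Real.sqrt 2 * Real.sqrt 2 = 2 := Real.mul_self_sqrt (by norm_num)
    linear_combination Real.sqrt S * hellingerDist ν ν' υ * h22
  rw [hdiff]
  calc |∫ z, a z * b z ∂υ| ≤ _ := hfinal
    _ = 2 * Real.sqrt S * hellingerDist ν ν' υ := hsimp
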